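/- arXiv:2407.03788 — 3 statements merged into one kernel-verified Lean document; each statement's English description precedes it below -/
import Mathlib

section
/- Let τ > 0 be a temperature, μ ≥ 0 a margin, B ≥ 2 an integer, i a fixed index, and let λ_{i,j} ∈ ℝ be given angles for each j ≠ i; set S = Σ_{j≠i} exp(cos(λ_{i,j})/τ) (a positive constant independent of the positive-pair angle). Define, as functions of the positive-pair angle λ, the contrastive loss Lc(λ) = -log( exp(cos(λ)/τ) / (exp(cos(λ)/τ) + S) ) and the subtractive angular margin contrastive loss La(λ) = -log( exp(cos(max(λ - μ, 0))/τ) / (exp(cos(max(λ - μ, 0))/τ) + S) ). Then for every λ with 0 ≤ λ ≤ π/2, both La and Lc are differentiable at λ and |La′(λ)| ≤ |Lc′(λ)|. -/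
open Real Filter Asymptotics Topology

private lemma hasDerivAt_cos_relu (μ : ℝ) (x : ℝ) :
    HasDerivAt (fun l : ℝ => Real.cos (max (l - μ) 0))
      (-Real.sin (max (x - μ) 0)) x := by
  rcases lt_trichotomy x μ with h | h | h
  · -- locally constant
    have hx : max (x - μ) 0 = 0 := max_eq_right (by linarith)
    rw [hx, Real.sin_zero, neg_zero]
    have : (fun l : ℝ => Real.cos (max (l - μ) 0)) =ᶠ[𝓝 x] fun _ => (1 : ℝ) := by
      filter_upwards [Iio_mem_nhds h] with l hl
      rw [max_eq_right (by simpa using le_of_lt (by simpa using hl : l < μ)), Real.cos_zero]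
    exact (hasDerivAt_const x (1 : ℝ)).congr_of_eventuallyEq this
  · subst h
    have hx : max (x - x) 0 = 0 := by simp
    rw [hx, Real.sin_zero, neg_zero]
    rw [hasDerivAt_iff_isLittleO]
    have hO : (fun l : ℝ => Real.cos (max (l - x) 0) - Real.cos (max (x - x) 0) - (l - x) • (0:ℝ))
        =O[𝓝 x] fun l => (l - x) * (l - x) := by
      apply IsBigO.of_bound 1
      filter_upwards with l
      have h1 : Real.cos (max (l - x) 0) ≤ 1 := Real.cos_le_one _
      have h2 : 1 - (max (l - x) 0) ^ 2 / 2 ≤ Real.cos (max (l - x) 0) :=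
        Real.one_sub_sq_div_two_le_cos
      have h3 : (max (l - x) 0) ^ 2 ≤ (l - x) ^ 2 := by
        rcases le_or_gt (l - x) 0 with h4 | h4
        · rw [max_eq_right h4]; simpa using sq_nonneg (l - x)
        · rw [max_eq_left h4.le]
      simp only [sub_self, max_self, max_eq_right le_rfl, Real.cos_zero, smul_zero, sub_zero]
      rw [Real.norm_eq_abs, Real.norm_eq_abs, abs_of_nonpos (by linarith), one_mul,
        ← sq, abs_of_nonneg (sq_nonneg _)]
      nlinarith
    refine hO.trans_isLittleO ?_
    have : (fun l : ℝ => l - x) =o[𝓝 x] fun _ => (1 : ℝ) := by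
      rw [isLittleO_one_iff]
      have := ((continuous_id.sub continuous_const).tendsto x : Tendsto (fun l : ℝ => l - x) (𝓝 x) (𝓝 (x - x)))
      have h0 : Tendsto (fun l : ℝ => l - x) (𝓝 x) (𝓝 (x - x)) := this
      rw [sub_self] at h0
      exact h0
    simpa using this.mul_isBigO (isBigO_refl (fun l : ℝ => l - x) (𝓝 x))
  · -- locally cos (l - μ)
    have : (fun l : ℝ => Real.cos (max (l - μ) 0)) =ᶠ[𝓝 x] fun l => Real.cos (l - μ) := by
      filter_upwards [Ioi_mem_nhds h] with l hl
      rw [max_eq_left (by simpa using le_of_lt (by simpa using hl : μ < l))]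
    have hd : HasDerivAt (fun l : ℝ => Real.cos (l - μ)) (-Real.sin (x - μ)) x := by
      have := (Real.hasDerivAt_cos (x - μ)).comp x
        ((hasDerivAt_id x).sub_const μ)
      simpa [Function.comp_def] using this
    rw [max_eq_left (by linarith)]
    exact hd.congr_of_eventuallyEq this

private lemma key_hasDerivAt (τ S : ℝ) (hτ : 0 < τ) (hS : 0 < S)
    (f : ℝ → ℝ) (f' x : ℝ) (hf : HasDerivAt f f' x) :
    HasDerivAt (fun l => -Real.log (Real.exp (f l / τ) / (Real.exp (f l / τ) + S)))
      (-f' * S / (τ * (Real.exp (f x / τ) + S))) x := by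
  have hfun : (fun l => -Real.log (Real.exp (f l / τ) / (Real.exp (f l / τ) + S)))
      = fun l => Real.log (Real.exp (f l / τ) + S) - f l / τ := by
    funext l
    have he : (0:ℝ) < Real.exp (f l / τ) := Real.exp_pos _
    rw [Real.log_div (ne_of_gt he) (by positivity), Real.log_exp]
    ring
  rw [hfun]
  have hpos : (0:ℝ) < Real.exp (f x / τ) + S := by positivity
  have h1 : HasDerivAt (fun l => f l / τ) (f' / τ) x := hf.div_const τ
  have h2 : HasDerivAt (fun l => Real.exp (f l / τ) + S)
      (Real.exp (f x / τ) * (f' / τ)) x := ((Real.hasDerivAt_exp _).comp x h1).add_const S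
  have h3 : HasDerivAt (fun l => Real.log (Real.exp (f l / τ) + S))
      (Real.exp (f x / τ) * (f' / τ) / (Real.exp (f x / τ) + S)) x :=
    h2.log (ne_of_gt hpos)
  have h4 := h3.sub h1
  refine HasDerivAt.congr_deriv h4 ?_
  field_simp [hτ.ne', hpos.ne']
  ring

/-- Theorem 1 of the paper: the subtractive angular margin decays the gradient norm.
With `S` the (positive-pair-independent) sum over negative pairs in a batch of size
`B ≥ 2`, both the margined loss `La` and the plain contrastive loss `Lc` are
differentiable on `[0, π/2]` and `|La'| ≤ |Lc'|` there. -/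
theorem angular_margin_gradient_decay
    (τ μ : ℝ) (hτ : 0 < τ) (hμ : 0 ≤ μ)
    (B : ℕ) (hB : 2 ≤ B) (i : Fin B) (angle : Fin B → ℝ)
    (S : ℝ)
    (hS : S = ∑ j ∈ Finset.univ.erase i, Real.exp (Real.cos (angle j) / τ))
    (Lc La : ℝ → ℝ)
    (hLc : ∀ l : ℝ, Lc l =
      -Real.log (Real.exp (Real.cos l / τ) / (Real.exp (Real.cos l / τ) + S)))
    (hLa : ∀ l : ℝ, La l =
      -Real.log (Real.exp (Real.cos (max (l - μ) 0) / τ) /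
        (Real.exp (Real.cos (max (l - μ) 0) / τ) + S))) :
    ∀ l : ℝ, 0 ≤ l → l ≤ Real.pi / 2 →
      DifferentiableAt ℝ La l ∧ DifferentiableAt ℝ Lc l ∧
        |deriv La l| ≤ |deriv Lc l| := by
  have hSpos : 0 < S := by
    rw [hS]
    apply Finset.sum_pos
    · intro j _; exact Real.exp_pos _
    · -- erase i nonempty since card ≥ 2
      rw [← Finset.card_pos, Finset.card_erase_of_mem (Finset.mem_univ i),
        Finset.card_univ, Fintype.card_fin]
      omega
  intro l hl0 hlπ
  set m := max (l - μ) 0 with hm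
  have hm0 : 0 ≤ m := le_max_right _ _
  have hml : m ≤ l := max_le (by linarith) hl0
  -- derivatives
  have hLc' : HasDerivAt Lc (-(-Real.sin l) * S / (τ * (Real.exp (Real.cos l / τ) + S))) l := by
    have := key_hasDerivAt τ S hτ hSpos Real.cos (-Real.sin l) l (Real.hasDerivAt_cos l)
    have hfun : Lc = fun l => -Real.log (Real.exp (Real.cos l / τ) / (Real.exp (Real.cos l / τ) + S)) :=
      funext hLc
    rw [hfun]; exact this
  have hLa' : HasDerivAt La (-(-Real.sin m) * S / (τ * (Real.exp (Real.cos m / τ) + S))) l := by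
    have := key_hasDerivAt τ S hτ hSpos (fun l => Real.cos (max (l - μ) 0))
      (-Real.sin m) l (hasDerivAt_cos_relu μ l)
    have hfun : La = fun l => -Real.log (Real.exp (Real.cos (max (l - μ) 0) / τ) /
        (Real.exp (Real.cos (max (l - μ) 0) / τ) + S)) := funext hLa
    rw [hfun]; exact this
  refine ⟨hLa'.differentiableAt, hLc'.differentiableAt, ?_⟩
  rw [hLa'.deriv, hLc'.deriv]
  have hsinl : 0 ≤ Real.sin l := Real.sin_nonneg_of_nonneg_of_le_pi hl0
    (by linarith [Real.pi_pos])
  have hsinm : 0 ≤ Real.sin m := Real.sin_nonneg_of_nonneg_of_le_pi hm0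
    (by linarith [Real.pi_pos])
  have hsin : Real.sin m ≤ Real.sin l :=
    Real.strictMonoOn_sin.monotoneOn ⟨by linarith [Real.pi_pos], by linarith⟩
      ⟨by linarith [Real.pi_pos], hlπ⟩ hml
  have hcos : Real.cos l ≤ Real.cos m :=
    Real.cos_le_cos_of_nonneg_of_le_pi hm0 (by linarith [Real.pi_pos]) hml
  have hEm : Real.exp (Real.cos l / τ) ≤ Real.exp (Real.cos m / τ) :=
    Real.exp_le_exp.mpr (by gcongr)
  have hEl : (0:ℝ) < Real.exp (Real.cos l / τ) := Real.exp_pos _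
  have ha : (0:ℝ) ≤ -(-Real.sin m) * S / (τ * (Real.exp (Real.cos m / τ) + S)) := by
    rw [neg_neg]; positivity
  have hb : (0:ℝ) ≤ -(-Real.sin l) * S / (τ * (Real.exp (Real.cos l / τ) + S)) := by
    rw [neg_neg]; positivity
  rw [abs_of_nonneg ha, abs_of_nonneg hb, neg_neg, neg_neg]
  apply div_le_div₀ (by positivity) (by nlinarith) (by positivity)
  have : Real.exp (Real.cos l / τ) + S ≤ Real.exp (Real.cos m / τ) + S := by linarith
  nlinarith
end

section
/- Let τ > 0, μ ≥ 0, S > 0, and define Lc(λ) = -log( exp(cos(λ)/τ) / (exp(cos(λ)/τ) + S) ) and La(λ) = -log( exp(cos(max(λ - μ, 0))/τ) / (exp(cos(max(λ - μ, 0))/τ) + S) ). Then for every λ with μ < λ < π (so that sin(λ) ≠ 0 and Lc′(λ) ≠ 0), the ratio of derivatives satisfies La′(λ) / Lc′(λ) = (sin(λ - μ)/sin(λ)) · (exp(cos(λ)/τ) + S) / (exp(cos(λ - μ)/τ) + S). -/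
lemma loss_hasDerivAt (τ S : ℝ) (hτ : 0 < τ) (hS : 0 < S) (x : ℝ) :
    HasDerivAt
      (fun y => -Real.log (Real.exp (Real.cos y / τ) / (Real.exp (Real.cos y / τ) + S)))
      (Real.sin x * S / (τ * (Real.exp (Real.cos x / τ) + S))) x := by
  have h1 : HasDerivAt (fun y => Real.cos y / τ) (-Real.sin x / τ) x :=
    (Real.hasDerivAt_cos x).div_const τ
  have h2 := h1.exp
  have hpos : (0:ℝ) < Real.exp (Real.cos x / τ) + S := by positivity
  have h3 := (h2.add_const S).log hpos.ne'
  have h4 := h3.sub h1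
  have heq : (fun y => -Real.log (Real.exp (Real.cos y / τ) / (Real.exp (Real.cos y / τ) + S)))
      = fun y => Real.log (Real.exp (Real.cos y / τ) + S) - Real.cos y / τ := by
    funext y
    rw [Real.log_div (Real.exp_pos _).ne' (by positivity), Real.log_exp]
    ring
  rw [heq]
  refine h4.congr_deriv ?_
  field_simp
  ring

/-- Ratio of the margined to the unmargined derivative for `μ < λ < π`:
`La'(λ)/Lc'(λ) = (sin(λ-μ)/sin λ) · (exp(cos λ/τ)+S)/(exp(cos(λ-μ)/τ)+S)`. -/
theorem angular_margin_deriv_ratio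
    (τ μ S : ℝ) (hτ : 0 < τ) (hμ : 0 ≤ μ) (hS : 0 < S)
    (Lc La : ℝ → ℝ)
    (hLc : ∀ l : ℝ, Lc l =
      -Real.log (Real.exp (Real.cos l / τ) / (Real.exp (Real.cos l / τ) + S)))
    (hLa : ∀ l : ℝ, La l =
      -Real.log (Real.exp (Real.cos (max (l - μ) 0) / τ) /
        (Real.exp (Real.cos (max (l - μ) 0) / τ) + S))) :
    ∀ l : ℝ, μ < l → l < Real.pi →
      deriv La l / deriv Lc l =
        (Real.sin (l - μ) / Real.sin l) *
          ((Real.exp (Real.cos l / τ) + S) /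
            (Real.exp (Real.cos (l - μ) / τ) + S)) := by
  intro l hμl hlπ
  have hl0 : 0 < l := lt_of_le_of_lt hμ hμl
  have hsin : 0 < Real.sin l := Real.sin_pos_of_pos_of_lt_pi hl0 hlπ
  -- deriv Lc
  have hLcfun : Lc = fun y => -Real.log (Real.exp (Real.cos y / τ) / (Real.exp (Real.cos y / τ) + S)) :=
    funext hLc
  have dLc : deriv Lc l = Real.sin l * S / (τ * (Real.exp (Real.cos l / τ) + S)) := by
    rw [hLcfun]; exact (loss_hasDerivAt τ S hτ hS l).deriv
  -- deriv La : La agrees with y ↦ F (y - μ) near l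
  have hcomp : HasDerivAt (fun y =>
      -Real.log (Real.exp (Real.cos (y - μ) / τ) / (Real.exp (Real.cos (y - μ) / τ) + S)))
      (Real.sin (l - μ) * S / (τ * (Real.exp (Real.cos (l - μ) / τ) + S))) l := by
    have := (loss_hasDerivAt τ S hτ hS (l - μ)).comp l ((hasDerivAt_id l).sub_const μ)
    rw [mul_one] at this; exact this
  have hev : La =ᶠ[nhds l] (fun y =>
      -Real.log (Real.exp (Real.cos (y - μ) / τ) / (Real.exp (Real.cos (y - μ) / τ) + S))) := by
    have hmem : {y : ℝ | μ < y} ∈ nhds l := (isOpen_lt continuous_const continuous_id).mem_nhds hμl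
    filter_upwards [hmem] with y hy
    rw [hLa y, max_eq_left (by linarith : (0:ℝ) ≤ y - μ)]
  have dLa : deriv La l = Real.sin (l - μ) * S / (τ * (Real.exp (Real.cos (l - μ) / τ) + S)) := by
    rw [hev.deriv_eq]; exact hcomp.deriv
  rw [dLa, dLc]
  have hA : (0:ℝ) < Real.exp (Real.cos (l - μ) / τ) + S := by positivity
  have hB : (0:ℝ) < Real.exp (Real.cos l / τ) + S := by positivity
  field_simp
end

section
/- Let τ > 0, μ ≥ 0, S > 0, and define Lc(λ) = -log( exp(cos(λ)/τ) / (exp(cos(λ)/τ) + S) ) and La(λ) = -log( exp(cos(max(λ - μ, 0))/τ) / (exp(cos(max(λ - μ, 0))/τ) + S) ). Then for every λ with 0 ≤ λ ≤ π/2, both derivatives exist and satisfy 0 ≤ La′(λ) ≤ Lc′(λ). -/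
open Real Filter Asymptotics Topology

/-- derivative of the clipped-cos map `x ↦ cos (max (x - μ) 0)`. -/
lemma hasDerivAt_cos_max (μ : ℝ) (l : ℝ) :
    HasDerivAt (fun x => Real.cos (max (x - μ) 0))
      (-Real.sin (max (l - μ) 0)) l := by
  rcases lt_trichotomy l μ with h | h | h
  · -- locally constant 1
    have hmax : max (l - μ) 0 = 0 := max_eq_right (by linarith)
    have hev : (fun x => Real.cos (max (x - μ) 0)) =ᶠ[𝓝 l] fun _ => (1 : ℝ) := by
      filter_upwards [eventually_lt_nhds h] with x hx
      rw [max_eq_right (by linarith), Real.cos_zero]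
    rw [hmax, Real.sin_zero, neg_zero]
    exact (hasDerivAt_const l (1 : ℝ)).congr_of_eventuallyEq hev
  · -- kink point: derivative 0 via little-o
    subst h
    have hmax : max (l - l) 0 = 0 := by simp
    rw [hmax, Real.sin_zero, neg_zero]
    rw [hasDerivAt_iff_isLittleO]
    rw [Asymptotics.isLittleO_iff]
    intro c hc
    filter_upwards [eventually_abs_sub_lt l (show (0:ℝ) < 2 * c by linarith)] with x hx
    have hm : max (x - l) 0 ^ 2 ≤ (x - l) ^ 2 := by
      rcases le_or_gt (x - l) 0 with h' | h'
      · rw [max_eq_right h']; simpa using sq_nonneg (x - l)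
      · rw [max_eq_left h'.le]
    have hcos : 1 - (x - l) ^ 2 / 2 ≤ Real.cos (max (x - l) 0) := by
      have := Real.one_sub_sq_div_two_le_cos (x := max (x - l) 0)
      nlinarith
    have hle1 : Real.cos (max (x - l) 0) ≤ 1 := Real.cos_le_one _
    have : ‖Real.cos (max (x - l) 0) - Real.cos (max (l - l) 0) - (x - l) • (0:ℝ)‖
        = 1 - Real.cos (max (x - l) 0) := by
      simp only [hmax, Real.cos_zero, smul_zero, sub_zero, Real.norm_eq_abs]
      rw [abs_of_nonpos (by linarith)]; ring
    rw [this, Real.norm_eq_abs]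
    have h2 : 1 - Real.cos (max (x - l) 0) ≤ (x - l) ^ 2 / 2 := by linarith
    have h3 : (x - l) ^ 2 / 2 ≤ c * |x - l| := by
      nlinarith [sq_abs (x - l), abs_nonneg (x - l)]
    linarith
  · -- smooth region
    have hmax : max (l - μ) 0 = l - μ := max_eq_left (by linarith)
    have hev : (fun x => Real.cos (max (x - μ) 0)) =ᶠ[𝓝 l]
        fun x => Real.cos (x - μ) := by
      filter_upwards [eventually_gt_nhds h] with x hx
      rw [max_eq_left (by linarith)]
    have hd : HasDerivAt (fun x => Real.cos (x - μ)) (-Real.sin (l - μ)) l := by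
      have h1 : HasDerivAt (fun x : ℝ => x - μ) 1 l :=
        (hasDerivAt_id l).sub_const μ
      simpa [Function.comp_def] using (Real.hasDerivAt_cos (l - μ)).comp l h1
    rw [hmax]
    exact hd.congr_of_eventuallyEq hev

/-- derivative of the loss `l ↦ -log (exp (g l / τ) / (exp (g l / τ) + S))`
given a derivative of `g`. -/
lemma hasDerivAt_loss (τ S : ℝ) (hτ : 0 < τ) (hS : 0 < S)
    (g : ℝ → ℝ) (g' : ℝ) (l : ℝ) (hg : HasDerivAt g g' l)
    (L : ℝ → ℝ)
    (hL : ∀ x : ℝ, L x =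
      -Real.log (Real.exp (g x / τ) / (Real.exp (g x / τ) + S))) :
    HasDerivAt L (-(S * g') / (τ * (Real.exp (g l / τ) + S))) l := by
  have hfun : L = fun x => Real.log (Real.exp (g x / τ) + S) - g x / τ := by
    funext x
    rw [hL x, Real.log_div (Real.exp_pos _).ne' (by positivity), Real.log_exp]
    ring
  have h1 : HasDerivAt (fun x => g x / τ) (g' / τ) l := hg.div_const τ
  have h2 : HasDerivAt (fun x => Real.exp (g x / τ) + S)
      (Real.exp (g l / τ) * (g' / τ)) l := (h1.exp).add_const S
  have hpos : Real.exp (g l / τ) + S ≠ 0 := by positivity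
  have h3 : HasDerivAt (fun x => Real.log (Real.exp (g x / τ) + S))
      ((Real.exp (g l / τ) * (g' / τ)) / (Real.exp (g l / τ) + S)) l :=
    h2.log hpos
  have h4 := h3.sub h1
  rw [hfun]
  refine h4.congr_deriv ?_
  field_simp
  ring

/-- Sign-resolved form of Theorem 1: on `[0, π/2]` both derivatives exist and
`0 ≤ La'(λ) ≤ Lc'(λ)`. -/
theorem angular_margin_gradient_decay_signed
    (τ μ S : ℝ) (hτ : 0 < τ) (hμ : 0 ≤ μ) (hS : 0 < S)
    (Lc La : ℝ → ℝ)
    (hLc : ∀ l : ℝ, Lc l =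
      -Real.log (Real.exp (Real.cos l / τ) / (Real.exp (Real.cos l / τ) + S)))
    (hLa : ∀ l : ℝ, La l =
      -Real.log (Real.exp (Real.cos (max (l - μ) 0) / τ) /
        (Real.exp (Real.cos (max (l - μ) 0) / τ) + S))) :
    ∀ l : ℝ, 0 ≤ l → l ≤ Real.pi / 2 →
      DifferentiableAt ℝ La l ∧ DifferentiableAt ℝ Lc l ∧
        0 ≤ deriv La l ∧ deriv La l ≤ deriv Lc l := by
  intro l hl0 hl2
  set m := max (l - μ) 0 with hm
  have hm0 : 0 ≤ m := le_max_right _ _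
  have hml : m ≤ l := max_le (by linarith) hl0
  have hm2 : m ≤ Real.pi / 2 := hml.trans hl2
  have hπ := Real.pi_pos
  -- derivatives
  have hga : HasDerivAt (fun x => Real.cos (max (x - μ) 0)) (-Real.sin m) l :=
    hasDerivAt_cos_max μ l
  have hgc : HasDerivAt Real.cos (-Real.sin l) l := Real.hasDerivAt_cos l
  have hda : HasDerivAt La
      (-(S * -Real.sin m) / (τ * (Real.exp (Real.cos m / τ) + S))) l :=
    hasDerivAt_loss τ S hτ hS _ _ l hga La hLa
  have hdc : HasDerivAt Lc
      (-(S * -Real.sin l) / (τ * (Real.exp (Real.cos l / τ) + S))) l :=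
    hasDerivAt_loss τ S hτ hS _ _ l hgc Lc hLc
  refine ⟨hda.differentiableAt, hdc.differentiableAt, ?_, ?_⟩
  · rw [hda.deriv]
    have hsin : 0 ≤ Real.sin m :=
      Real.sin_nonneg_of_nonneg_of_le_pi hm0 (by linarith)
    have hden : 0 < τ * (Real.exp (Real.cos m / τ) + S) := by positivity
    have hnum : -(S * -Real.sin m) = S * Real.sin m := by ring
    rw [hnum]
    exact div_nonneg (mul_nonneg hS.le hsin) hden.le
  · rw [hda.deriv, hdc.deriv]
    have h1 : -(S * -Real.sin m) = S * Real.sin m := by ring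
    have h2 : -(S * -Real.sin l) = S * Real.sin l := by ring
    rw [h1, h2]
    have hsinle : Real.sin m ≤ Real.sin l :=
      Real.sin_le_sin_of_le_of_le_pi_div_two (by linarith) hl2 hml
    have hsinl : 0 ≤ Real.sin l :=
      Real.sin_nonneg_of_nonneg_of_le_pi hl0 (by linarith)
    have hcosle : Real.cos l ≤ Real.cos m :=
      Real.cos_le_cos_of_nonneg_of_le_pi hm0 (by linarith) hml
    have hdenle : τ * (Real.exp (Real.cos l / τ) + S)
        ≤ τ * (Real.exp (Real.cos m / τ) + S) := by
      have : Real.exp (Real.cos l / τ) ≤ Real.exp (Real.cos m / τ) :=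
        Real.exp_le_exp.mpr ((div_le_div_iff_of_pos_right hτ).mpr hcosle)
      nlinarith
    have hdpos : 0 < τ * (Real.exp (Real.cos l / τ) + S) := by positivity
    exact div_le_div₀ (mul_nonneg hS.le hsinl)
      (mul_le_mul_of_nonneg_left hsinle hS.le) hdpos hdenle
end
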